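/- Assume every travel-time function d_a is continuous and the charging unit price function λ_e : [0, ∞) → ℝ is continuous. Then every local minimum of the Beckmann function B over the feasible set of path flows is a Wardrop Equilibrium. -/

import Mathlib

open Finset MeasureTheory

/-- The data of the multiclass (EV/GV) routing game with coupled charging.
Vehicle classes are indexed by `Bool`: `true` is the electric class (e) and
`false` is the gasoline class (g). Paths are gathered in the type `R`, the
origin–destination pair of a path `r` being `od r` (so `R_k = od ⁻¹' {k}`). -/
structure RoutingGame where
  /-- arcs -/
  A : Type
  finA : Fintype A
  /-- paths -/
  R : Type
  finR : Fintype R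
  /-- origin–destination pairs -/
  K : Type
  /-- the O-D pair of each path -/
  od : R → K
  /-- each O-D pair has at least one path -/
  od_surj : Function.Surjective od
  /-- arc lengths -/
  len : A → ℝ
  len_pos : ∀ a, 0 < len a
  /-- travel demands -/
  D : K → ℝ
  D_nonneg : ∀ k, 0 ≤ D k
  /-- arc–path incidence `δ_{a,r} ∈ {0,1}` -/
  δ : A → R → ℝ
  δ_mem : ∀ a r, δ a r = 0 ∨ δ a r = 1
  /-- class shares `X_e, X_g` -/
  X : Bool → ℝ
  X_nonneg : ∀ s, 0 ≤ X s
  /-- energy consumptions per distance unit `m_e, m_g` -/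
  m : Bool → ℝ
  m_pos : ∀ s, 0 < m s
  /-- travel-time (congestion) functions `d_a` -/
  d : A → ℝ → ℝ
  /-- tolls `t_{a,s}` -/
  toll : A → Bool → ℝ
  toll_nonneg : ∀ a s, 0 ≤ toll a s
  /-- value of time `τ` -/
  τ : ℝ
  τ_pos : 0 < τ
  /-- (constant) gasoline unit price `λ_g` -/
  lamg : ℝ
  lamg_nonneg : 0 ≤ lamg
  /-- charging unit price function `λ_e` -/
  lame : ℝ → ℝ

attribute [instance] RoutingGame.finA RoutingGame.finR

namespace RoutingGame

variable (G : RoutingGame)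

/-- Arc flow of class `s`: `x_{a,s} = ∑_r δ_{a,r} f_{r,s}`. -/
noncomputable def arcFlow (f : G.R → Bool → ℝ) (a : G.A) (s : Bool) : ℝ :=
  ∑ r, G.δ a r * f r s

/-- Total arc flow `x_a = x_{a,e} + x_{a,g}`. -/
noncomputable def totFlow (f : G.R → Bool → ℝ) (a : G.A) : ℝ :=
  G.arcFlow f a true + G.arcFlow f a false

open scoped Classical in
/-- Feasible path flows: nonnegative and meeting the demand `X_s D_k` of each
O-D pair `k` for each class `s`. -/
def Feasible (f : G.R → Bool → ℝ) : Prop :=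
  (∀ r s, 0 ≤ f r s) ∧
  ∀ (k : G.K) (s : Bool), (∑ r, if G.od r = k then f r s else 0) = G.X s * G.D k

/-- Aggregate energy need of class `s`: `L_s = m_s ∑_a x_{a,s} l_a`. -/
noncomputable def Lneed (f : G.R → Bool → ℝ) (s : Bool) : ℝ :=
  G.m s * ∑ a, G.arcFlow f a s * G.len a

/-- Unit energy price of class `s` at flow `f`: `λ_e(L_e(f))` for EV, `λ_g` for GV. -/
noncomputable def price (f : G.R → Bool → ℝ) (s : Bool) : ℝ :=
  if s then G.lame (G.Lneed f true) else G.lamg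

/-- Cost of path `r` for class `s` at flow `f`:
`c_{r,s}(f) = ∑_a δ_{a,r} (τ d_a(x_a) + t_{a,s} + l_a m_s λ_s)`. -/
noncomputable def cost (f : G.R → Bool → ℝ) (r : G.R) (s : Bool) : ℝ :=
  ∑ a, G.δ a r * (G.τ * G.d a (G.totFlow f a) + G.toll a s + G.len a * G.m s * G.price f s)

/-- Wardrop Equilibrium: feasible, and for each class any used path is not more
costly than any other path with the same O-D pair. -/
def IsWE (f : G.R → Bool → ℝ) : Prop :=
  G.Feasible f ∧ ∀ (s : Bool) (r r' : G.R), G.od r = G.od r' → 0 < f r s →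
    G.cost f r s ≤ G.cost f r' s

/-- The Beckmann function
`B(f) = τ ∑_a ∫_0^{x_a} d_a + ∑_{a,s} t_{a,s} x_{a,s} + ∫_0^{L_e(f)} λ_e + λ_g L_g(f)`. -/
noncomputable def Beckmann (f : G.R → Bool → ℝ) : ℝ :=
  G.τ * ∑ a, (∫ u in (0 : ℝ)..G.totFlow f a, G.d a u)
    + ∑ a, ∑ s : Bool, G.toll a s * G.arcFlow f a s
    + (∫ u in (0 : ℝ)..G.Lneed f true, G.lame u)
    + G.lamg * G.Lneed f false

end RoutingGame

/-- Prop. 3: if the travel-time functions and the charging unit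
price are continuous, then every local minimum of the Beckmann function over the
feasible set of path flows is a Wardrop Equilibrium. -/
theorem localMin_Beckmann_isWE (G : RoutingGame)
    (hd : ∀ a, ContinuousOn (G.d a) (Set.Ici 0))
    (hlame : ContinuousOn G.lame (Set.Ici 0))
    (f : G.R → Bool → ℝ) (hfeas : G.Feasible f)
    (hmin : IsLocalMinOn G.Beckmann {f' | G.Feasible f'} f) :
    G.IsWE f := by
  classical
  refine ⟨hfeas, ?_⟩
  intro s r r' hod hpos
  rcases eq_or_ne r r' with rfl | hrr
  · exact le_rfl
  set ε₀ : ℝ := f r s with hε₀def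
  have hε₀pos : 0 < ε₀ := hpos
  set dir : G.R → Bool → ℝ :=
    fun ρ σ => if σ = s then ((if ρ = r' then (1:ℝ) else 0) - (if ρ = r then 1 else 0)) else 0
    with hdirdef
  set fε : ℝ → G.R → Bool → ℝ := fun ε ρ σ => f ρ σ + ε * dir ρ σ with hfεdef
  have hδnn : ∀ a ρ, 0 ≤ G.δ a ρ := fun a ρ => by rcases G.δ_mem a ρ with h | h <;> simp [h]
  have hfε0 : fε 0 = f := by funext ρ σ; simp [hfεdef]
  -- arc flow formula
  have harc : ∀ (ε : ℝ) (a : G.A) (σ : Bool), G.arcFlow (fε ε) a σ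
      = G.arcFlow f a σ + ε * (if σ = s then G.δ a r' - G.δ a r else 0) := by
    intro ε a σ
    have h1 : G.arcFlow (fε ε) a σ
        = G.arcFlow f a σ + ε * ∑ ρ, G.δ a ρ * dir ρ σ := by
      simp only [RoutingGame.arcFlow, hfεdef, Finset.mul_sum]
      rw [← Finset.sum_add_distrib]
      exact Finset.sum_congr rfl fun ρ _ => by ring
    rw [h1]
    congr 1
    by_cases hσ : σ = s
    · simp [hdirdef, hσ, mul_sub, Finset.sum_sub_distrib, mul_ite, mul_one, mul_zero,
        Finset.sum_ite_eq']
    · simp [hdirdef, hσ]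
  -- total flow formula
  have htot : ∀ (ε : ℝ) (a : G.A), G.totFlow (fε ε) a
      = G.totFlow f a + ε * (G.δ a r' - G.δ a r) := by
    intro ε a
    simp only [RoutingGame.totFlow, harc]
    cases s <;> simp <;> ring
  -- energy formula
  have hLneed : ∀ (ε : ℝ) (σ : Bool), G.Lneed (fε ε) σ
      = G.Lneed f σ + ε * (if σ = s then
          G.m σ * ((∑ a, G.δ a r' * G.len a) - ∑ a, G.δ a r * G.len a) else 0) := by
    intro ε σ
    by_cases hσ : σ = s
    · subst hσ
      simp only [RoutingGame.Lneed, harc, eq_self_iff_true, if_true]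
      have h2 : ∀ a ∈ (univ : Finset G.A),
          (G.arcFlow f a σ + ε * (G.δ a r' - G.δ a r)) * G.len a
          = G.arcFlow f a σ * G.len a + ε * (G.δ a r' * G.len a - G.δ a r * G.len a) :=
        fun a _ => by ring
      rw [Finset.sum_congr rfl h2, Finset.sum_add_distrib, ← Finset.mul_sum,
        Finset.sum_sub_distrib]
      ring
    · simp [RoutingGame.Lneed, harc, hσ]
  -- nonnegativity facts
  have harcNN : ∀ (a : G.A) (σ : Bool), 0 ≤ G.arcFlow f a σ :=
    fun a σ => Finset.sum_nonneg fun ρ _ => mul_nonneg (hδnn a ρ) (hfeas.1 ρ σ)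
  have harcGe : ∀ a : G.A, G.δ a r * ε₀ ≤ G.arcFlow f a s := by
    intro a
    exact Finset.single_le_sum (f := fun ρ => G.δ a ρ * f ρ s)
      (fun ρ _ => mul_nonneg (hδnn a ρ) (hfeas.1 ρ s)) (Finset.mem_univ r)
  have htotNN0 : ∀ a : G.A, 0 ≤ G.totFlow f a :=
    fun a => add_nonneg (harcNN a true) (harcNN a false)
  have htotGe : ∀ a : G.A, G.δ a r * ε₀ ≤ G.totFlow f a := by
    intro a
    have h1 := harcGe a
    have h2 := harcNN a true
    have h3 := harcNN a false
    cases s <;> simp only [RoutingGame.totFlow] <;> linarith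
  have htotNN : ∀ ε ∈ Set.Icc (0:ℝ) ε₀, ∀ a : G.A,
      0 ≤ G.totFlow f a + ε * (G.δ a r' - G.δ a r) := by
    intro ε hε a
    obtain ⟨h0, h1⟩ := hε
    have h2 := hδnn a r
    have h3 := hδnn a r'
    nlinarith [htotGe a, mul_nonneg (hδnn a r) (sub_nonneg.2 h1), mul_nonneg h0 (hδnn a r')]
  have hPnn : ∀ ρ : G.R, 0 ≤ ∑ a, G.δ a ρ * G.len a :=
    fun ρ => Finset.sum_nonneg fun a _ => mul_nonneg (hδnn a ρ) (G.len_pos a).le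
  have hLnn0 : ∀ σ : Bool, 0 ≤ G.Lneed f σ := by
    intro σ
    exact mul_nonneg (G.m_pos σ).le
      (Finset.sum_nonneg fun a _ => mul_nonneg (harcNN a σ) (G.len_pos a).le)
  have hLge : G.m s * (ε₀ * ∑ a, G.δ a r * G.len a) ≤ G.Lneed f s := by
    have h1 : ∑ a, ε₀ * (G.δ a r * G.len a) ≤ ∑ a, G.arcFlow f a s * G.len a := by
      refine Finset.sum_le_sum fun a _ => ?_
      have := mul_le_mul_of_nonneg_right (harcGe a) (G.len_pos a).le
      nlinarith [this]
    rw [← Finset.mul_sum] at h1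
    exact mul_le_mul_of_nonneg_left h1 (G.m_pos s).le
  have hLNN : ∀ ε ∈ Set.Icc (0:ℝ) ε₀,
      0 ≤ G.Lneed f true + ε * (if (true : Bool) = s then
        G.m true * ((∑ a, G.δ a r' * G.len a) - ∑ a, G.δ a r * G.len a) else 0) := by
    intro ε hε
    obtain ⟨h0, h1⟩ := hε
    by_cases hs : (true : Bool) = s
    · rw [if_pos hs]
      subst hs
      nlinarith [hLge, mul_nonneg (hPnn r) (sub_nonneg.2 h1), mul_nonneg h0 (hPnn r'),
        (G.m_pos true).le, mul_nonneg (mul_nonneg (G.m_pos true).le (hPnn r)) (sub_nonneg.2 h1),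
        mul_nonneg (mul_nonneg (G.m_pos true).le h0) (hPnn r')]
    · rw [if_neg hs]
      simpa using hLnn0 true
  -- feasibility of perturbed flows
  have hfeasε : ∀ ε ∈ Set.Icc (0:ℝ) ε₀, G.Feasible (fε ε) := by
    intro ε hε
    obtain ⟨h0, h1⟩ := hε
    constructor
    · intro ρ σ
      have h3 : 0 ≤ f ρ σ := hfeas.1 ρ σ
      have h5 : ε ≤ f r s := hε₀def ▸ h1
      simp only [hfεdef, hdirdef]
      by_cases hσ : σ = s
      · rw [if_pos hσ]
        by_cases hρ' : ρ = r'
        · have h6 : ¬ρ = r := fun h => hrr (h ▸ hρ')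
          rw [if_pos hρ', if_neg h6]
          nlinarith
        · rw [if_neg hρ']
          by_cases hρ : ρ = r
          · rw [if_pos hρ, hρ, hσ] at *
            nlinarith
          · rw [if_neg hρ]
            nlinarith
      · rw [if_neg hσ]
        nlinarith
    · intro k σ
      have hsplit : ∀ ρ : G.R, (if G.od ρ = k then fε ε ρ σ else 0)
          = (if G.od ρ = k then f ρ σ else 0)
            + ε * (if σ = s then
                ((if ρ = r' then (if G.od r' = k then (1:ℝ) else 0) else 0)
                  - (if ρ = r then (if G.od r = k then (1:ℝ) else 0) else 0)) else 0) := by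
        intro ρ
        simp only [hfεdef, hdirdef]
        by_cases hσ : σ = s
        · rw [if_pos hσ, if_pos hσ]
          by_cases h3' : G.od ρ = k
          · have hA : (if ρ = r' then (1:ℝ) else 0)
                = (if ρ = r' then (if G.od r' = k then (1:ℝ) else 0) else 0) := by
              by_cases h1' : ρ = r'
              · rw [if_pos h1', if_pos h1', if_pos (h1' ▸ h3')]
              · rw [if_neg h1', if_neg h1']
            have hB : (if ρ = r then (1:ℝ) else 0)
                = (if ρ = r then (if G.od r = k then (1:ℝ) else 0) else 0) := by
              by_cases h2' : ρ = r
              · rw [if_pos h2', if_pos h2', if_pos (h2' ▸ h3')]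
              · rw [if_neg h2', if_neg h2']
            rw [if_pos h3', if_pos h3', hA, hB]
          · have hA : (if ρ = r' then (if G.od r' = k then (1:ℝ) else 0) else 0) = 0 := by
              by_cases h1' : ρ = r'
              · rw [if_pos h1', if_neg (h1' ▸ h3')]
              · rw [if_neg h1']
            have hB : (if ρ = r then (if G.od r = k then (1:ℝ) else 0) else 0) = 0 := by
              by_cases h2' : ρ = r
              · rw [if_pos h2', if_neg (h2' ▸ h3')]
              · rw [if_neg h2']
            rw [if_neg h3', if_neg h3', hA, hB]
            ring
        · rw [if_neg hσ, if_neg hσ]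
          by_cases h3' : G.od ρ = k
          · rw [if_pos h3', if_pos h3']
          · rw [if_neg h3', if_neg h3']
            ring
      rw [Finset.sum_congr rfl fun ρ _ => hsplit ρ, Finset.sum_add_distrib, ← Finset.mul_sum]
      by_cases hσ : σ = s
      · simp only [hσ, eq_self_iff_true, if_true, Finset.sum_sub_distrib,
          Finset.sum_ite_eq', Finset.mem_univ, if_true, hod]
        rw [hfeas.2 k s]
        ring
      · simp only [if_neg hσ, Finset.sum_const_zero, mul_zero, add_zero]
        exact hfeas.2 k σ
  -- transfer of local minimality
  have hcontfε : Continuous fε := by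
    apply continuous_pi
    intro ρ
    apply continuous_pi
    intro σ
    exact continuous_const.add (continuous_id.mul continuous_const)
  have h0mem : (0:ℝ) ∈ Set.Icc (0:ℝ) ε₀ := ⟨le_rfl, hε₀pos.le⟩
  have hminφ : ∀ᶠ ε in nhdsWithin (0:ℝ) (Set.Icc (0:ℝ) ε₀),
      G.Beckmann f ≤ G.Beckmann (fε ε) := by
    have htend : Filter.Tendsto fε (nhdsWithin (0:ℝ) (Set.Icc (0:ℝ) ε₀))
        (nhdsWithin f {f' | G.Feasible f'}) := by
      rw [← hfε0]
      exact (hcontfε.continuousWithinAt).tendsto_nhdsWithin fun ε hε => hfeasε ε hε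
    exact htend.eventually hmin
  -- extended integrands
  set d' : G.A → ℝ → ℝ := fun a u => G.d a (max u 0) with hd'def
  have hd'cont : ∀ a, Continuous (d' a) := fun a =>
    (hd a).comp_continuous (continuous_id.max continuous_const) fun u => le_max_right u 0
  set lam' : ℝ → ℝ := fun u => G.lame (max u 0) with hlam'def
  have hlam'cont : Continuous lam' :=
    hlame.comp_continuous (continuous_id.max continuous_const) fun u => le_max_right u 0
  have hint_d : ∀ (a : G.A) (y : ℝ), 0 ≤ y →
      (∫ u in (0:ℝ)..y, G.d a u) = ∫ u in (0:ℝ)..y, d' a u := by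
    intro a y hy
    refine intervalIntegral.integral_congr fun u hu => ?_
    rw [Set.uIcc_of_le hy] at hu
    simp [hd'def, max_eq_left hu.1]
  have hint_lam : ∀ y : ℝ, 0 ≤ y →
      (∫ u in (0:ℝ)..y, G.lame u) = ∫ u in (0:ℝ)..y, lam' u := by
    intro y hy
    refine intervalIntegral.integral_congr fun u hu => ?_
    rw [Set.uIcc_of_le hy] at hu
    simp [hlam'def, max_eq_left hu.1]
  -- the model function
  set ψ : ℝ → ℝ := fun ε =>
      G.τ * (∑ a, ∫ u in (0:ℝ)..(G.totFlow f a + ε * (G.δ a r' - G.δ a r)), d' a u)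
      + (∑ a, ∑ σ : Bool, G.toll a σ * (G.arcFlow f a σ + ε * (if σ = s then (G.δ a r' - G.δ a r) else 0)))
      + (∫ u in (0:ℝ)..(G.Lneed f true + ε * (if (true : Bool) = s then G.m true * ((∑ a, G.δ a r' * G.len a) - ∑ a, G.δ a r * G.len a) else 0)), lam' u)
      + G.lamg * (G.Lneed f false + ε * (if (false : Bool) = s then G.m false * ((∑ a, G.δ a r' * G.len a) - ∑ a, G.δ a r * G.len a) else 0)) with hψdef
  have hψeq : ∀ ε ∈ Set.Icc (0:ℝ) ε₀, G.Beckmann (fε ε) = ψ ε := by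
    intro ε hε
    simp only [hψdef, RoutingGame.Beckmann, htot, harc, hLneed]
    rw [Finset.sum_congr rfl fun a _ => hint_d a _ (htotNN ε hε a), hint_lam _ (hLNN ε hε)]
  -- derivative of ψ
  have hpiece : ∀ a : G.A, HasDerivAt
      (fun ε : ℝ => ∫ u in (0:ℝ)..(G.totFlow f a + ε * (G.δ a r' - G.δ a r)), d' a u)
      ((G.δ a r' - G.δ a r) * G.d a (G.totFlow f a)) 0 := by
    intro a
    have hg : HasDerivAt (fun ε : ℝ => G.totFlow f a + ε * (G.δ a r' - G.δ a r)) (G.δ a r' - G.δ a r) 0 := by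
      simpa using ((hasDerivAt_id (0:ℝ)).mul_const (G.δ a r' - G.δ a r)).const_add (G.totFlow f a)
    have hF := ((hd'cont a).integral_hasStrictDerivAt 0
        (G.totFlow f a + 0 * (G.δ a r' - G.δ a r))).hasDerivAt
    have hcomp := HasDerivAt.comp 0 hF hg
    have heq : d' a (G.totFlow f a + 0 * (G.δ a r' - G.δ a r)) = G.d a (G.totFlow f a) := by
      simp [hd'def, max_eq_left (htotNN0 a)]
    rw [heq, mul_comm (G.d a (G.totFlow f a))] at hcomp
    exact hcomp
  have h1 : HasDerivAt (fun ε : ℝ =>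
      G.τ * (∑ a, ∫ u in (0:ℝ)..(G.totFlow f a + ε * (G.δ a r' - G.δ a r)), d' a u))
      (G.τ * ∑ a, (G.δ a r' - G.δ a r) * G.d a (G.totFlow f a)) 0 :=
    HasDerivAt.const_mul G.τ (HasDerivAt.fun_sum fun a _ => hpiece a)
  have h2 : HasDerivAt (fun ε : ℝ =>
      ∑ a, ∑ σ : Bool, G.toll a σ * (G.arcFlow f a σ + ε * (if σ = s then (G.δ a r' - G.δ a r) else 0)))
      (∑ a, ∑ σ : Bool, G.toll a σ * (if σ = s then (G.δ a r' - G.δ a r) else 0)) 0 := by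
    refine HasDerivAt.fun_sum fun a _ => HasDerivAt.fun_sum fun σ _ => ?_
    have h := (((hasDerivAt_id (0:ℝ)).mul_const
        (if σ = s then (G.δ a r' - G.δ a r) else 0)).const_add
        (G.arcFlow f a σ)).const_mul (G.toll a σ)
    rw [one_mul] at h
    exact h
  have h3 : HasDerivAt (fun ε : ℝ => ∫ u in (0:ℝ)..(G.Lneed f true + ε * (if (true : Bool) = s then G.m true * ((∑ a, G.δ a r' * G.len a) - ∑ a, G.δ a r * G.len a) else 0)), lam' u)
      ((if (true : Bool) = s then G.m true * ((∑ a, G.δ a r' * G.len a) - ∑ a, G.δ a r * G.len a) else 0) * G.lame (G.Lneed f true)) 0 := by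
    have hg : HasDerivAt (fun ε : ℝ => G.Lneed f true + ε * (if (true : Bool) = s then G.m true * ((∑ a, G.δ a r' * G.len a) - ∑ a, G.δ a r * G.len a) else 0)) (if (true : Bool) = s then G.m true * ((∑ a, G.δ a r' * G.len a) - ∑ a, G.δ a r * G.len a) else 0) 0 := by
      simpa using ((hasDerivAt_id (0:ℝ)).mul_const (if (true : Bool) = s then G.m true * ((∑ a, G.δ a r' * G.len a) - ∑ a, G.δ a r * G.len a) else 0)).const_add (G.Lneed f true)
    have hF := (hlam'cont.integral_hasStrictDerivAt 0
        (G.Lneed f true + 0 * (if (true : Bool) = s then G.m true * ((∑ a, G.δ a r' * G.len a) - ∑ a, G.δ a r * G.len a) else 0))).hasDerivAt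
    have hcomp := HasDerivAt.comp 0 hF hg
    have heq : lam' (G.Lneed f true + 0 * (if (true : Bool) = s then G.m true * ((∑ a, G.δ a r' * G.len a) - ∑ a, G.δ a r * G.len a) else 0)) = G.lame (G.Lneed f true) := by
      simp [hlam'def, max_eq_left (hLnn0 true)]
    rw [heq, mul_comm (G.lame (G.Lneed f true))] at hcomp
    exact hcomp
  have h4 : HasDerivAt (fun ε : ℝ => G.lamg * (G.Lneed f false + ε * (if (false : Bool) = s then G.m false * ((∑ a, G.δ a r' * G.len a) - ∑ a, G.δ a r * G.len a) else 0)))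
      (G.lamg * (if (false : Bool) = s then G.m false * ((∑ a, G.δ a r' * G.len a) - ∑ a, G.δ a r * G.len a) else 0)) 0 := by
    have h := (((hasDerivAt_id (0:ℝ)).mul_const (if (false : Bool) = s then G.m false * ((∑ a, G.δ a r' * G.len a) - ∑ a, G.δ a r * G.len a) else 0)).const_add (G.Lneed f false)).const_mul G.lamg
    rw [one_mul] at h
    exact h
  have hψd : HasDerivAt ψ
      (G.τ * (∑ a, (G.δ a r' - G.δ a r) * G.d a (G.totFlow f a))
        + (∑ a, ∑ σ : Bool, G.toll a σ * (if σ = s then (G.δ a r' - G.δ a r) else 0))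
        + (if (true : Bool) = s then G.m true * ((∑ a, G.δ a r' * G.len a) - ∑ a, G.δ a r * G.len a) else 0) * G.lame (G.Lneed f true)
        + G.lamg * (if (false : Bool) = s then G.m false * ((∑ a, G.δ a r' * G.len a) - ∑ a, G.δ a r * G.len a) else 0)) 0 := by
    rw [hψdef]
    exact ((h1.add h2).add h3).add h4
  -- local minimality of ψ and nonnegativity of the derivative
  have hminψ : IsLocalMinOn ψ (Set.Icc (0:ℝ) ε₀) 0 := by
    show ∀ᶠ ε in nhdsWithin (0:ℝ) (Set.Icc (0:ℝ) ε₀), ψ 0 ≤ ψ ε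
    filter_upwards [hminφ, self_mem_nhdsWithin] with ε hBε hεmem
    rw [← hψeq ε hεmem, ← hψeq 0 h0mem, hfε0]
    exact hBε
  have hcone : ε₀ ∈ posTangentConeAt (Set.Icc (0:ℝ) ε₀) 0 := by
    have hseg : segment ℝ (0:ℝ) ε₀ ⊆ Set.Icc (0:ℝ) ε₀ := by
      rw [segment_eq_Icc hε₀pos.le]
    simpa using sub_mem_posTangentConeAt_of_segment_subset hseg
  have hCnn := hminψ.hasFDerivWithinAt_nonneg hψd.hasDerivWithinAt.hasFDerivWithinAt hcone
  simp only [ContinuousLinearMap.smulRight_apply, ContinuousLinearMap.one_apply,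
    ContinuousLinearMap.toSpanSingleton_apply, smul_eq_mul] at hCnn
  have hCnn' : 0 ≤ G.τ * (∑ a, (G.δ a r' - G.δ a r) * G.d a (G.totFlow f a))
        + (∑ a, ∑ σ : Bool, G.toll a σ * (if σ = s then (G.δ a r' - G.δ a r) else 0))
        + (if (true : Bool) = s then G.m true * ((∑ a, G.δ a r' * G.len a) - ∑ a, G.δ a r * G.len a) else 0) * G.lame (G.Lneed f true)
        + G.lamg * (if (false : Bool) = s then G.m false * ((∑ a, G.δ a r' * G.len a) - ∑ a, G.δ a r * G.len a) else 0) := by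
    nlinarith [hCnn, hε₀pos]
  -- identify the derivative with the cost difference
  have hC : G.cost f r' s - G.cost f r s
      = G.τ * (∑ a, (G.δ a r' - G.δ a r) * G.d a (G.totFlow f a))
        + (∑ a, ∑ σ : Bool, G.toll a σ * (if σ = s then (G.δ a r' - G.δ a r) else 0))
        + (if (true : Bool) = s then G.m true * ((∑ a, G.δ a r' * G.len a) - ∑ a, G.δ a r * G.len a) else 0) * G.lame (G.Lneed f true)
        + G.lamg * (if (false : Bool) = s then G.m false * ((∑ a, G.δ a r' * G.len a) - ∑ a, G.δ a r * G.len a) else 0) := by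
    simp only [RoutingGame.cost, RoutingGame.price]
    rw [← Finset.sum_sub_distrib]
    cases s
    · simp only [Fintype.sum_bool, Bool.false_eq_true, Bool.true_eq_false, if_false, if_true,
        eq_self_iff_true, mul_zero, zero_mul, add_zero, zero_add, ite_true, ite_false]
      rw [Finset.mul_sum]
      have e4 : G.lamg * (G.m false * ((∑ a, G.δ a r' * G.len a) - ∑ a, G.δ a r * G.len a))
          = ∑ a, G.lamg * (G.m false * (G.δ a r' * G.len a - G.δ a r * G.len a)) := by
        rw [← Finset.sum_sub_distrib, Finset.mul_sum, Finset.mul_sum]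
      rw [e4, ← Finset.sum_add_distrib, ← Finset.sum_add_distrib]
      exact Finset.sum_congr rfl fun a _ => by ring
    · simp only [Fintype.sum_bool, Bool.false_eq_true, Bool.true_eq_false, if_false, if_true,
        eq_self_iff_true, mul_zero, zero_mul, add_zero, zero_add, ite_true, ite_false]
      rw [Finset.mul_sum]
      have e4 : G.m true * ((∑ a, G.δ a r' * G.len a) - ∑ a, G.δ a r * G.len a)
            * G.lame (G.Lneed f true)
          = ∑ a, G.m true * (G.δ a r' * G.len a - G.δ a r * G.len a) * G.lame (G.Lneed f true) := by
        rw [← Finset.sum_sub_distrib, Finset.mul_sum, Finset.sum_mul]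
      rw [e4, ← Finset.sum_add_distrib, ← Finset.sum_add_distrib]
      exact Finset.sum_congr rfl fun a _ => by ring
  linarith [hCnn', hC]
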